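/- arXiv:2212.02150 — 9 statements merged into one kernel-verified Lean document; each statement's English description precedes it below -/
import Mathlib

section
/- For a generator ∂ satisfying (H1)–(H4), and for any μ ∈ N and any x in the support of μ, one has ∂(μ − δ_x) = ∂μ if and only if ∂(μ + δ_x) = ∂μ. Equivalently, H_x(μ − δ_x) = H_x(μ), where H_x(μ) := 1{∂(μ + δ_x) ≠ ∂μ}. -/
/-- The Dirac counting measure at a point, in the model of counting measures
on `X` as functions `X → ℕ` (pointwise order and addition). -/
noncomputable def delta {X : Type*} (x : X) : X → ℕ := Set.indicator {x} 1

/-- A generator: a map on counting measures satisfying (H1) thinning, (H2) additivity,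
(H3) idempotency and (H4) consistency. -/
def IsGenerator {X : Type*} (D : (X → ℕ) → (X → ℕ)) : Prop :=
  (∀ μ, D μ ≤ μ) ∧
  (∀ μ x, D μ x ≠ 0 → D (μ + delta x) = D μ + delta x) ∧
  (∀ μ μ' : X → ℕ, μ' ≤ μ - D μ → D (D μ + μ') = D μ) ∧
  (∀ μ μ' ψ : X → ℕ, μ' ≤ μ → D μ = D μ' → D (μ + ψ) = D (μ' + ψ))

/-- The hull operator associated with a generator. -/
def hull {X : Type*} (D : (X → ℕ) → (X → ℕ)) (μ : X → ℕ) : Set X :=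
  {x | D (μ + delta x) = D μ}

open scoped Classical

/-- The indicator `H_x(μ) = 1{∂(μ + δ_x) ≠ ∂μ}`, as a real number. -/
noncomputable def Hf {X : Type*} (D : (X → ℕ) → (X → ℕ)) (x : X) (μ : X → ℕ) : ℝ :=
  if D (μ + delta x) = D μ then 0 else 1

theorem generator_minus_point {X : Type*} (D : (X → ℕ) → (X → ℕ))
    (hD : IsGenerator D) (μ : X → ℕ) (x : X) (hx : μ x ≠ 0) :
    D (μ - delta x) = D μ ↔ D (μ + delta x) = D μ := by
  classical
  obtain ⟨h1, h2, h3, h4⟩ := hD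
  have hdx : ∀ y, delta x y = if y = x then 1 else 0 := by
    intro y; simp [delta, Set.indicator]
  have hsub : μ - delta x + delta x = μ := by
    funext y
    by_cases hy : y = x
    · subst hy
      simp only [Pi.sub_apply, Pi.add_apply, hdx, if_pos rfl, if_true]
      omega
    · simp only [Pi.sub_apply, Pi.add_apply, hdx, if_neg hy]; omega
  constructor
  · intro h
    have := h4 μ (μ - delta x) (delta x) (fun y => Nat.sub_le _ _) h.symm
    rw [hsub] at this
    exact this
  · intro h
    have hDx : D μ x = 0 := by
      by_contra hne
      have h2' := h2 μ x hne
      rw [h] at h2'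
      have hcc := congrFun h2' x
      rw [Pi.add_apply, hdx x, if_pos rfl] at hcc
      omega
    have hle : D μ ≤ μ - delta x := by
      intro y
      by_cases hy : y = x
      · subst hy; simp [hDx]
      · simp only [Pi.sub_apply, hdx, if_neg hy]
        exact h1 μ y
    have hμ' : μ - delta x - D μ ≤ μ - D μ := fun y =>
      Nat.sub_le_sub_right (Nat.sub_le _ _) _
    have key := h3 μ (μ - delta x - D μ) hμ'
    have heq : D μ + (μ - delta x - D μ) = μ - delta x := by
      funext y
      simp only [Pi.add_apply, Pi.sub_apply]
      have := hle y
      simp only [Pi.sub_apply] at this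
      omega
    rw [heq] at key
    exact key
end

section
/- For a generator ∂ and any μ ∈ N, the hull of μ coincides with the hull of ∂μ: [μ] = [∂μ], where [μ] := {x ∈ X : ∂(μ + δ_x) = ∂μ}. -/
open scoped Classical

/-- For a generator `D` and any `μ`, the hull of `μ` coincides with the
hull of `D μ`: `[μ] = [∂μ]`. -/
theorem hull_generator_eq {X : Type*} (D : (X → ℕ) → (X → ℕ))
    (hD : IsGenerator D) (μ : X → ℕ) :
    hull D μ = hull D (D μ) := by
  obtain ⟨h1, h2, h3, h4⟩ := hD
  have hDD : D (D μ) = D μ := by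
    have := h3 μ 0 (fun x => Nat.zero_le _)
    simpa using this
  ext x
  simp only [hull, Set.mem_setOf_eq]
  rw [h4 μ (D μ) (delta x) (h1 μ) hDD.symm, hDD]
end

section
/- For a generator ∂ and any μ ∈ N, the support of ∂μ equals the set of points x in the support of μ such that ∂(μ − δ_x) ≠ ∂μ. -/
open scoped Classical

/-- For a generator `D` and any `μ`, the support of `D μ` equals the set of
points `x` in the support of `μ` with `D (μ − δ_x) ≠ D μ`. -/
theorem support_generator {X : Type*} (D : (X → ℕ) → (X → ℕ))
    (hD : IsGenerator D) (μ : X → ℕ) :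
    {x | D μ x ≠ 0} = {x | μ x ≠ 0 ∧ D (μ - delta x) ≠ D μ} := by
  obtain ⟨h1, h2, h3, h4⟩ := hD
  ext x
  simp only [Set.mem_setOf_eq]
  have hdx : delta x x = 1 := by simp [delta]
  constructor
  · intro hx
    have hμx : μ x ≠ 0 := fun h => hx (Nat.le_zero.mp (h ▸ h1 μ x))
    refine ⟨hμx, fun heq => ?_⟩
    have hsum : (μ - delta x) + delta x = μ := by
      funext y
      by_cases hy : y = x
      · subst hy
        simp only [Pi.add_apply, Pi.sub_apply, hdx]
        omega
      · simp [delta, Set.indicator_apply, hy]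
    have h4' := h4 μ (μ - delta x) (delta x) (fun y => Nat.sub_le _ _) heq.symm
    rw [hsum, h2 μ x hx] at h4'
    have := congrFun h4' x
    simp only [Pi.add_apply, hdx] at this
    omega
  · rintro ⟨hμx, hne⟩
    by_contra h0
    apply hne
    have hDx : D μ x = 0 := by simpa using h0
    have hle : D μ ≤ μ - delta x := by
      intro y
      by_cases hy : y = x
      · subst hy; simp [hDx]
      · simpa [delta, Set.indicator_apply, hy] using h1 μ y
    have h3' := h3 μ ((μ - delta x) - D μ)
      (fun y => Nat.sub_le_sub_right (Nat.sub_le _ _) _)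
    have hsum2 : D μ + ((μ - delta x) - D μ) = μ - delta x := by
      funext y
      have := hle y
      simp only [Pi.add_apply, Pi.sub_apply] at *
      omega
    rw [hsum2] at h3'
    exact h3'
end

section
/- For a generator ∂ and any μ ∈ N, the generator equals the restriction of μ to the complement of the hull: ∂μ = μ restricted to [μ]^c, where [μ] = {x : ∂(μ + δ_x) = ∂μ}. In particular, ∂μ retains multiplicities: ∂μ({x}) = μ({x}) for every x in the support of ∂μ. -/
open scoped Classical

/-- For a generator `D`, `D μ` is the restriction of `μ` to the complement
of the hull `[μ]`; in particular `D μ` retains the multiplicities of its points. -/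
theorem generator_eq_restrict_hull_compl {X : Type*} (D : (X → ℕ) → (X → ℕ))
    (hD : IsGenerator D) (μ : X → ℕ) :
    D μ = (hull D μ)ᶜ.indicator μ ∧ ∀ x, D μ x ≠ 0 → D μ x = μ x := by
  obtain ⟨h1, h2, h3, h4⟩ := hD
  -- not in hull → full multiplicity
  have key : ∀ x, x ∉ hull D μ → D μ x = μ x := by
    intro x hx
    by_contra hne
    have hlt : D μ x < μ x := lt_of_le_of_ne (h1 μ x) hne
    have hδ : delta x ≤ μ - D μ := by
      intro y
      by_cases hy : y = x
      · subst hy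
        have h1x : D μ y ≤ μ y := h1 μ y
        simp only [Pi.sub_apply]
        simp only [delta, Set.indicator_of_mem (Set.mem_singleton y), Pi.one_apply]
        omega
      · simp [delta, Set.indicator, hy]
    have e1 : D (D μ + delta x) = D μ := h3 μ (delta x) hδ
    have e2 : D (D μ) = D μ := by
      have := h3 μ 0 (by intro y; simp)
      simpa using this
    have hle : D μ ≤ D μ + delta x := by
      intro y; simp only [Pi.add_apply]; omega
    have h4' := h4 (D μ + delta x) (D μ) (μ - D μ) hle (e1.trans e2.symm)
    have ha : D μ + delta x + (μ - D μ) = μ + delta x := by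
      funext y
      have h1y : D μ y ≤ μ y := h1 μ y
      simp only [Pi.add_apply, Pi.sub_apply]
      omega
    have hb : D μ + (μ - D μ) = μ := by
      funext y
      have h1y : D μ y ≤ μ y := h1 μ y
      simp only [Pi.add_apply, Pi.sub_apply]
      omega
    rw [ha, hb] at h4'
    exact hx h4'
  -- nonzero → not in hull
  have key2 : ∀ x, D μ x ≠ 0 → x ∉ hull D μ := by
    intro x hx hmem
    have := h2 μ x hx
    have hx1 : D (μ + delta x) x = D μ x + 1 := by
      rw [this]
      simp [delta, Set.indicator]
    rw [hmem] at hx1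
    omega
  constructor
  · funext y
    by_cases hy : y ∈ hull D μ
    · have h0 : D μ y = 0 := by
        by_contra h0
        exact key2 y h0 hy
      have : y ∉ (hull D μ)ᶜ := by simpa using hy
      rw [Set.indicator_of_notMem this, h0]
    · have : y ∈ (hull D μ)ᶜ := by simpa using hy
      rw [Set.indicator_of_mem this, key y hy]
  · intro x hx
    exact key x (key2 x hx)
end

section
/- Let ∂ be a generator with hull operator [·], and let μ, ψ ∈ N. Then the restriction of μ to [μ]^c equals ψ if and only if the restriction of μ to [ψ]^c equals ψ; and in this case [μ] = [ψ]. -/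
open scoped Classical

lemma delta_apply {X : Type*} (x y : X) : delta x y = if y = x then 1 else 0 := by
  simp [delta, Set.indicator_apply]

lemma gen_idem {X : Type*} {D : (X → ℕ) → (X → ℕ)} (hD : IsGenerator D) (μ : X → ℕ) :
    D (D μ) = D μ := by
  have := hD.2.2.1 μ 0 (by simp)
  simpa using this

lemma gen_apply {X : Type*} {D : (X → ℕ) → (X → ℕ)} (hD : IsGenerator D) (μ : X → ℕ)
    (x : X) : D μ x = if x ∈ hull D μ then 0 else μ x := by
  obtain ⟨h1, h2, h3, h4⟩ := hD
  by_cases hx : x ∈ hull D μ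
  · simp only [hx, if_true]
    by_contra h0
    have h2' := h2 μ x h0
    have : D μ = D μ + delta x := hx.symm.trans h2'
    have := congrFun this x
    simp [delta_apply] at this
  · simp only [hx, if_false]
    have hle : D μ x ≤ μ x := h1 μ x
    by_contra hne
    have hlt : D μ x < μ x := lt_of_le_of_ne hle hne
    have hdel : delta x ≤ μ - D μ := by
      intro y
      by_cases hy : y = x
      · subst hy; simp [delta_apply, Pi.sub_apply]; omega
      · simp [delta_apply, hy]
    have hA : D (D μ + delta x) = D μ := h3 μ (delta x) hdel
    have hB : D (μ + delta x) = D (D μ + delta x) :=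
      h4 μ (D μ) (delta x) (h1 μ) (gen_idem ⟨h1, h2, h3, h4⟩ μ).symm
    exact hx (hB.trans hA)

lemma gen_eq_indicator {X : Type*} {D : (X → ℕ) → (X → ℕ)} (hD : IsGenerator D)
    (μ : X → ℕ) : D μ = (hull D μ)ᶜ.indicator μ := by
  funext x
  rw [gen_apply hD μ x, Set.indicator_apply]
  by_cases hx : x ∈ hull D μ <;> simp [hx]

lemma hull_gen {X : Type*} {D : (X → ℕ) → (X → ℕ)} (hD : IsGenerator D)
    (μ : X → ℕ) : hull D (D μ) = hull D μ := by
  obtain ⟨h1, h2, h3, h4⟩ := hD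
  ext x
  have key : D (μ + delta x) = D (D μ + delta x) :=
    h4 μ (D μ) (delta x) (h1 μ) (gen_idem ⟨h1, h2, h3, h4⟩ μ).symm
  have idem := gen_idem ⟨h1, h2, h3, h4⟩ μ
  simp only [hull, Set.mem_setOf_eq, key, idem]

/-- For a generator `D` and `μ, ψ`, the restriction of `μ` to `[μ]ᶜ`
equals `ψ` iff the restriction of `μ` to `[ψ]ᶜ` equals `ψ`; and then `[μ] = [ψ]`. -/
theorem restrict_hull_compl_iff {X : Type*} (D : (X → ℕ) → (X → ℕ))
    (hD : IsGenerator D) (μ ψ : X → ℕ) :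
    ((hull D μ)ᶜ.indicator μ = ψ ↔ (hull D ψ)ᶜ.indicator μ = ψ) ∧
      ((hull D μ)ᶜ.indicator μ = ψ → hull D μ = hull D ψ) := by
  obtain ⟨h1, h2, h3, h4⟩ := hD
  have hD' : IsGenerator D := ⟨h1, h2, h3, h4⟩
  have fwd_hull : (hull D μ)ᶜ.indicator μ = ψ → hull D μ = hull D ψ := by
    intro h
    have hψ : ψ = D μ := by rw [← h, gen_eq_indicator hD' μ]
    rw [hψ, hull_gen hD' μ]
  constructor
  · constructor
    · intro h
      rw [← fwd_hull h]
      exact h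
    · -- backward direction
      intro h
      have hle : ψ ≤ μ := by
        intro x
        rw [← h, Set.indicator_apply]
        split <;> simp
      have hzero : ∀ x ∈ hull D ψ, ψ x = 0 := by
        intro x hx
        rw [← h, Set.indicator_apply, if_neg (by simpa using hx)]
      have hfix : D ψ = ψ := by
        funext x
        rw [gen_apply hD' ψ x]
        by_cases hx : x ∈ hull D ψ
        · simp [hx, hzero x hx]
        · simp [hx]
      have hsub : hull D ψ ⊆ hull D μ := by
        intro x hx
        have hx' : D (ψ + delta x) = D ψ := hx
        have h4' := h4 (ψ + delta x) ψ (μ - ψ) (le_add_of_nonneg_right (by positivity)) hx'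
        have e1 : ψ + delta x + (μ - ψ) = μ + delta x := by
          rw [add_right_comm, add_tsub_cancel_of_le hle]
        have e2 : ψ + (μ - ψ) = μ := add_tsub_cancel_of_le hle
        show D (μ + delta x) = D μ
        rw [e1, e2] at h4'
        exact h4'
      have hDle : D μ ≤ ψ := by
        intro x
        rw [gen_apply hD' μ x]
        by_cases hx : x ∈ hull D μ
        · simp [hx]
        · have hxψ : x ∉ hull D ψ := fun hh => hx (hsub hh)
          have : ψ x = μ x := by
            rw [← h, Set.indicator_apply, if_pos (by simpa using hxψ)]
          simp [hx, this]
      have hsub2 : ψ - D μ ≤ μ - D μ := tsub_le_tsub_right hle _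
      have h3' : D (D μ + (ψ - D μ)) = D μ := h3 μ (ψ - D μ) hsub2
      rw [add_tsub_cancel_of_le hDle] at h3'
      have : ψ = D μ := by rw [← hfix, h3']
      rw [gen_eq_indicator hD' μ] at this
      exact this.symm
  · exact fwd_hull
end

section
/- Let ∂ be a generator. For all x, y ∈ X and μ ∈ N, the following three statements are equivalent: (i) ∂(μ + δ_x + δ_y) = ∂(μ + δ_x) = ∂(μ + δ_y); (ii) ∂(μ + δ_x + δ_y) = ∂(μ + δ_x) = ∂μ; (iii) ∂(μ + δ_x) = ∂(μ + δ_y) = ∂μ. -/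
open scoped Classical

lemma delta_apply_self {X : Type*} (x : X) : delta x x = 1 := by
  simp [delta]

lemma delta_apply_ne {X : Type*} {x z : X} (h : z ≠ x) : delta x z = 0 := by
  simp [delta, h]

/-- If `x` is not in the support of `D (μ + δ_x)`, then `D (μ + δ_x) = D μ`. -/
lemma key_lemma {X : Type*} {D : (X → ℕ) → (X → ℕ)} (hD : IsGenerator D)
    (μ : X → ℕ) (x : X) (h : D (μ + delta x) x = 0) :
    D (μ + delta x) = D μ := by
  obtain ⟨h1, h2, h3, h4⟩ := hD
  have hle : D (μ + delta x) ≤ μ := by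
    intro z
    by_cases hz : z = x
    · subst hz; simp [h]
    · have := h1 (μ + delta x) z
      simpa [delta_apply_ne hz] using this
  have hsub : μ - D (μ + delta x) ≤ (μ + delta x) - D (μ + delta x) := by
    intro z
    exact Nat.sub_le_sub_right (Nat.le_add_right _ _) _
  have h3' := h3 (μ + delta x) (μ - D (μ + delta x)) hsub
  have hadd : D (μ + delta x) + (μ - D (μ + delta x)) = μ := by
    funext z
    exact Nat.add_sub_cancel' (hle z)
  rw [hadd] at h3'
  exact h3'.symm

/-- If `D (μ + δ_x) = D μ` then adding any `ψ` preserves the equality. -/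
lemma mono_lemma {X : Type*} {D : (X → ℕ) → (X → ℕ)} (hD : IsGenerator D)
    (μ ψ : X → ℕ) (x : X) (h : D (μ + delta x) = D μ) :
    D (μ + delta x + ψ) = D (μ + ψ) :=
  hD.2.2.2 (μ + delta x) μ ψ (fun z => Nat.le_add_right _ _) h

/-- For a generator `D`, all `x, y` and `μ`, the statements
(i) `∂(μ+δx+δy) = ∂(μ+δx) = ∂(μ+δy)`, (ii) `∂(μ+δx+δy) = ∂(μ+δx) = ∂μ`, and
(iii) `∂(μ+δx) = ∂(μ+δy) = ∂μ` are equivalent. -/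
theorem two_point_lemma {X : Type*} (D : (X → ℕ) → (X → ℕ))
    (hD : IsGenerator D) (x y : X) (μ : X → ℕ) :
    ((D (μ + delta x + delta y) = D (μ + delta x) ∧
        D (μ + delta x) = D (μ + delta y)) ↔
      (D (μ + delta x + delta y) = D (μ + delta x) ∧
        D (μ + delta x) = D μ)) ∧
    ((D (μ + delta x + delta y) = D (μ + delta x) ∧
        D (μ + delta x) = D μ) ↔
      (D (μ + delta x) = D μ ∧ D (μ + delta y) = D μ)) := by
  obtain ⟨h1, h2, h3, h4⟩ := hD
  have hcomm : μ + delta y + delta x = μ + delta x + delta y := by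
    funext z; simp [Pi.add_apply]; ring
  constructor
  · constructor
    · rintro ⟨h12, h23⟩
      refine ⟨h12, ?_⟩
      by_contra hne
      have hx : D (μ + delta x) x ≠ 0 := fun h0 => hne (key_lemma ⟨h1, h2, h3, h4⟩ μ x h0)
      by_cases hy0 : D (μ + delta y) y = 0
      · exact hne (h23.trans (key_lemma ⟨h1, h2, h3, h4⟩ μ y hy0))
      · have hxy : D (μ + delta y) x ≠ 0 := by rw [← h23]; exact hx
        have h2' := h2 (μ + delta y) x hxy
        rw [hcomm] at h2'
        have : D (μ + delta y) = D (μ + delta y) + delta x := by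
          rw [← h2', h12, h23]
        have := congrFun this x
        simp [Pi.add_apply, delta_apply_self] at this
    · rintro ⟨h12, h2'⟩
      refine ⟨h12, ?_⟩
      have := mono_lemma ⟨h1, h2, h3, h4⟩ μ (delta y) x h2'
      exact (this.symm.trans h12).symm
  · constructor
    · rintro ⟨h12, h2'⟩
      refine ⟨h2', ?_⟩
      have := mono_lemma ⟨h1, h2, h3, h4⟩ μ (delta y) x h2'
      rw [← this, h12, h2']
    · rintro ⟨hx', hy'⟩
      refine ⟨?_, hx'⟩
      have := mono_lemma ⟨h1, h2, h3, h4⟩ μ (delta y) x hx'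
      rw [this, hy', hx']
end

section
/- Let ∂ be a generator and set H_x(μ) = 1{∂(μ + δ_x) ≠ ∂μ} and \bar H = 1 − H. Then for all x, y ∈ X and μ ∈ N: \bar H_y(μ + δ_x)·\bar H_x(μ + δ_y) = \bar H_x(μ)·\bar H_y(μ). -/
open scoped Classical

/-- `H̄_y(μ + δ_x) · H̄_x(μ + δ_y) = H̄_x(μ) · H̄_y(μ)` where `H̄ = 1 − H`. -/
theorem barH_product {X : Type*} (D : (X → ℕ) → (X → ℕ))
    (hD : IsGenerator D) (x y : X) (μ : X → ℕ) :
    (1 - Hf D y (μ + delta x)) * (1 - Hf D x (μ + delta y)) =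
      (1 - Hf D x μ) * (1 - Hf D y μ) := by
  obtain ⟨h1, h2, h3, h4⟩ := hD
  have hdx : ∀ z : X, delta (X := X) z z = 1 := by
    intro z; simp [delta]
  have hdne : ∀ z w : X, w ≠ z → delta (X := X) z w = 0 := by
    intro z w hzw; simp [delta, hzw]
  -- the two-point lemma
  have key : (D (μ + delta x + delta y) = D (μ + delta x) ∧
      D (μ + delta y + delta x) = D (μ + delta y)) ↔
      (D (μ + delta x) = D μ ∧ D (μ + delta y) = D μ) := by
    constructor
    · rintro ⟨ha, hb⟩
      have hcomm : μ + delta x + delta y = μ + delta y + delta x := by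
        abel
      have hxy : D (μ + delta x) = D (μ + delta y) := by
        rw [← ha, hcomm, hb]
      set ν := D (μ + delta x) with hν
      have hνμ : ν ≤ μ := by
        intro z
        by_cases hzx : z = x
        · rw [hzx]
          by_cases hxy' : x = y
          · -- x = y : use H2 contradiction argument
            by_contra hgt
            push_neg at hgt
            have hne0 : ν x ≠ 0 := by intro h; rw [h] at hgt; simp at hgt
            rw [hν] at hne0
            have h2' := h2 (μ + delta x) x hne0
            rw [← hν] at h2'
            rw [← hxy'] at ha
            rw [ha] at h2'
            have := congrFun h2' x
            simp only [Pi.add_apply, hdx x] at this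
            omega
          · -- x ≠ y : ν ≤ μ + δ_y and (δ_y) x = 0
            have hle := h1 (μ + delta y) x
            rw [← hxy] at hle
            simp only [Pi.add_apply, hdne y x hxy'] at hle
            simpa using hle
        · have hle := h1 (μ + delta x) z
          rw [← hν] at hle
          simp only [Pi.add_apply, hdne x z hzx] at hle
          simpa using hle
      have hμν : D μ = ν := by
        have hsub : μ - ν ≤ (μ + delta x) - D (μ + delta x) := by
          rw [← hν]
          exact tsub_le_tsub_right le_self_add ν
        have := h3 (μ + delta x) (μ - ν) hsub
        rw [← hν] at this
        rwa [add_tsub_cancel_of_le hνμ] at this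
      exact ⟨hμν.symm ▸ rfl, by rw [← hxy, hμν]⟩
    · rintro ⟨ha, hb⟩
      constructor
      · have := h4 (μ + delta x) μ (delta y) le_self_add ha
        rw [this, hb, ha]
      · have := h4 (μ + delta y) μ (delta x) le_self_add hb
        rw [this, ha, hb]
  by_cases hA : D (μ + delta x) = D μ <;> by_cases hB : D (μ + delta y) = D μ
  · obtain ⟨hc, hd⟩ := key.mpr ⟨hA, hB⟩
    simp [Hf, hA, hB, hc, hd]
  · have hnot : ¬ (D (μ + delta x + delta y) = D (μ + delta x) ∧
        D (μ + delta y + delta x) = D (μ + delta y)) := fun h => hB (key.mp h).2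
    rcases not_and_or.mp hnot with h | h <;> simp [Hf, h, hB]
  · have hnot : ¬ (D (μ + delta x + delta y) = D (μ + delta x) ∧
        D (μ + delta y + delta x) = D (μ + delta y)) := fun h => hA (key.mp h).1
    rcases not_and_or.mp hnot with h | h <;> simp [Hf, h, hA]
  · have hnot : ¬ (D (μ + delta x + delta y) = D (μ + delta x) ∧
        D (μ + delta y + delta x) = D (μ + delta y)) := fun h => hA (key.mp h).1
    rcases not_and_or.mp hnot with h | h <;> simp [Hf, h, hA]
end

section
/- Let ∂ be a generator satisfying ∂δ_x = δ_x for all x ∈ X. Define a relation y ≺ x if and only if ∂(δ_y + δ_x) = ∂δ_x (i.e., \bar H_y(δ_x) = 1). Then ≺ is a strict partial order on X: it is irreflexive, antisymmetric, and transitive. -/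
open scoped Classical

/-- if `∂δ_x = δ_x` for all `x`, the relation `y ≺ x ⟺ ∂(δ_y + δ_x) = ∂δ_x`
is a strict partial order: irreflexive, antisymmetric and transitive. -/
theorem prec_strict_partial_order {X : Type*} (D : (X → ℕ) → (X → ℕ))
    (hD : IsGenerator D) (hnt : ∀ x : X, D (delta x) = delta x) :
    (∀ x : X, ¬ D (delta x + delta x) = D (delta x)) ∧
    (∀ x y : X, D (delta x + delta y) = D (delta y) →
      ¬ D (delta y + delta x) = D (delta x)) ∧
    (∀ x y z : X, D (delta z + delta y) = D (delta y) →
      D (delta y + delta x) = D (delta x) →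
      D (delta z + delta x) = D (delta x)) := by
  obtain ⟨h1, h2, h3, h4⟩ := hD
  have irrefl : ∀ x : X, ¬ D (delta x + delta x) = D (delta x) := by
    intro x h
    have hne : D (delta x) x ≠ 0 := by
      rw [hnt x]; simp [delta]
    have h2' := h2 (delta x) x hne
    rw [h2', hnt x] at h
    have := congrFun h x
    simp [delta] at this
  refine ⟨irrefl, ?_, ?_⟩
  · intro x y hxy hyx
    rw [add_comm, hxy, hnt, hnt] at hyx
    rw [hyx] at hxy
    exact irrefl x hxy
  · intro x y z hzy hyx
    have e1 : D (delta z + delta y + delta x) = D (delta y + delta x) :=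
      h4 _ _ _ le_add_self (by rw [hzy])
    have e2 : D (delta y + delta x + delta z) = D (delta x + delta z) :=
      h4 _ _ _ le_add_self (by rw [hyx])
    calc D (delta z + delta x)
        = D (delta x + delta z) := by rw [add_comm]
      _ = D (delta y + delta x + delta z) := e2.symm
      _ = D (delta z + delta y + delta x) := by
          rw [show delta y + delta x + delta z = delta z + delta y + delta x from by ring]
      _ = D (delta y + delta x) := e1
      _ = D (delta x) := hyx
end

section
/- On X = R^d, the map sending a finite counting measure μ to its restriction to the set of extreme points (vertices) of the convex hull of the support of μ is a generator, i.e., it satisfies the thinning property (H1), the additivity property (H2), the idempotency property (H3), and the consistency property (H4). -/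
open scoped Classical

/-- The restriction of a finite counting measure `μ` on `ℝ^d` to the set of extreme
points (vertices) of the convex hull of its support: `x` is kept iff
`x ∉ conv(supp μ \ {x})`. -/
noncomputable def vertexGen {d : ℕ} (μ : EuclideanSpace ℝ (Fin d) →₀ ℕ) :
    EuclideanSpace ℝ (Fin d) →₀ ℕ :=
  μ.filter fun x => x ∉ convexHull ℝ ((↑μ.support : Set (EuclideanSpace ℝ (Fin d))) \ {x})

namespace VertexGenAux

open Set Finset

variable {E : Type*} [AddCommGroup E] [Module ℝ E]

/-- If `x` is in the convex hull of `conv(insert x C) \ {x}` with `C` convex, then `x ∈ C`. -/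
lemma pull_out {C : Set E} (hC : Convex ℝ C) {x : E}
    (h : x ∈ convexHull ℝ (convexHull ℝ (insert x C) \ {x})) : x ∈ C := by
  rcases C.eq_empty_or_nonempty with rfl | hne
  · simp at h
  · rw [convexHull_insert hne, hC.convexHull_eq] at h
    rw [_root_.convexHull_eq] at h
    obtain ⟨ι, t, w, z, hw0, hw1, hz, hx⟩ := h
    have key : ∀ i ∈ t, ∃ a b : ℝ, ∃ c, c ∈ C ∧ 0 ≤ a ∧ 0 < b ∧ a + b = 1 ∧
        a • x + b • c = z i := by
      intro i hi
      obtain ⟨hzi, hnex⟩ := hz i hi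
      rw [mem_convexJoin] at hzi
      obtain ⟨x', hx', c, hc, hseg⟩ := hzi
      rw [Set.mem_singleton_iff] at hx'
      subst hx'
      obtain ⟨a, b, ha, hb, hab, habz⟩ := hseg
      refine ⟨a, b, c, hc, ha, ?_, hab, habz⟩
      rcases hb.lt_or_eq with hblt | hbeq
      · exact hblt
      · exfalso
        apply hnex
        have ha1 : a = 1 := by linarith
        simp only [Set.mem_singleton_iff]
        rw [← habz, ha1, ← hbeq, one_smul, zero_smul, add_zero]
    choose! a b c hc ha hb hab habc using key
    set A : ℝ := ∑ i ∈ t, w i * a i with hA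
    have ha1 : ∀ i ∈ t, a i < 1 := fun i hi => by
      have := hab i hi; have := hb i hi; linarith
    have hwpos : ∃ i ∈ t, w i ≠ 0 := by
      by_contra hcon
      push_neg at hcon
      have : (∑ i ∈ t, w i) = 0 := Finset.sum_eq_zero hcon
      rw [hw1] at this; exact one_ne_zero this
    obtain ⟨i0, hi0, hwi0⟩ := hwpos
    have hwi0pos : 0 < w i0 := lt_of_le_of_ne (hw0 i0 hi0) (Ne.symm hwi0)
    have hAlt : A < 1 := by
      have : A < ∑ i ∈ t, w i := by
        apply Finset.sum_lt_sum
        · intro i hi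
          have h1 := hw0 i hi
          have h2 := ha i hi
          have h3 := ha1 i hi
          nlinarith
        · exact ⟨i0, hi0, by nlinarith [ha1 i0 hi0]⟩
      rwa [hw1] at this
    have h1A : (1 : ℝ) - A ≠ 0 := by linarith
    have hsum : x = A • x + ∑ i ∈ t, (w i * b i) • c i := by
      conv_lhs => rw [← hx, Finset.centerMass_eq_of_sum_1 _ _ hw1]
      have : ∀ i ∈ t, w i • z i = (w i * a i) • x + (w i * b i) • c i := by
        intro i hi
        rw [← habc i hi, smul_add, smul_smul, smul_smul]
      rw [Finset.sum_congr rfl this, Finset.sum_add_distrib, ← Finset.sum_smul]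
    have h2 : (1 - A) • x = ∑ i ∈ t, (w i * b i) • c i := by
      rw [sub_smul, one_smul]
      exact sub_eq_iff_eq_add'.mpr hsum
    have hsumb : (∑ i ∈ t, w i * b i) = 1 - A := by
      have : ∀ i ∈ t, w i * b i = w i - w i * a i := by
        intro i hi
        have hba : b i = 1 - a i := by have := hab i hi; linarith
        rw [hba]; ring
      rw [Finset.sum_congr rfl this, Finset.sum_sub_distrib, hw1]
    have hXc : x = ∑ i ∈ t, ((1 - A)⁻¹ * (w i * b i)) • c i := by
      calc x = (1 - A)⁻¹ • ((1 - A) • x) := by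
              rw [smul_smul, inv_mul_cancel₀ h1A, one_smul]
        _ = (1 - A)⁻¹ • ∑ i ∈ t, (w i * b i) • c i := by rw [h2]
        _ = ∑ i ∈ t, ((1 - A)⁻¹ * (w i * b i)) • c i := by
              rw [Finset.smul_sum]
              exact Finset.sum_congr rfl fun i _ => by rw [smul_smul]
    rw [hXc]
    apply hC.sum_mem
    · intro i hi
      have h1 : (0:ℝ) ≤ (1 - A)⁻¹ := inv_nonneg.mpr (by linarith)
      have h2 : (0:ℝ) ≤ w i * b i := mul_nonneg (hw0 i hi) (hb i hi).le
      exact mul_nonneg h1 h2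
    · rw [← Finset.mul_sum, hsumb, inv_mul_cancel₀ h1A]
    · exact fun i hi => hc i hi

/-- The filter predicate characterizes extreme points of the convex hull. -/
lemma mem_diff_iff_extreme {S : Set E} {x : E} (hxS : x ∈ S) :
    x ∉ convexHull ℝ (S \ {x}) ↔ x ∈ Set.extremePoints ℝ (convexHull ℝ S) := by
  constructor
  · intro hx
    rw [(convex_convexHull ℝ S).mem_extremePoints_iff_mem_diff_convexHull_diff]
    refine ⟨subset_convexHull ℝ S hxS, fun hmem => hx ?_⟩
    have hS : convexHull ℝ S = convexHull ℝ (insert x (convexHull ℝ (S \ {x}))) := by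
      rw [Set.insert_eq, convexHull_convexHull_union_right, ← Set.insert_eq,
        Set.insert_diff_singleton, Set.insert_eq_self.2 hxS]
    rw [hS] at hmem
    exact pull_out (convex_convexHull ℝ _) hmem
  · intro hx hmem
    rw [(convex_convexHull ℝ S).mem_extremePoints_iff_mem_diff_convexHull_diff] at hx
    apply hx.2
    refine convexHull_mono ?_ hmem
    intro y hy
    exact ⟨subset_convexHull ℝ S hy.1, hy.2⟩

end VertexGenAux

section Main

open VertexGenAux

variable {d : ℕ}

local notation "X" => EuclideanSpace ℝ (Fin d)

/-- Minkowski: the convex hull of a finite set equals the convex hull of the extreme points. -/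
lemma minkowski_finite (S : Set (EuclideanSpace ℝ (Fin d))) (hS : S.Finite) :
    convexHull ℝ (Set.extremePoints ℝ (convexHull ℝ S)) = convexHull ℝ S := by
  have hcomp : IsCompact (convexHull ℝ S) := hS.isCompact_convexHull (𝕜 := ℝ)
  have hext : (convexHull ℝ S).extremePoints ℝ ⊆ S := extremePoints_convexHull_subset
  have hfin : ((convexHull ℝ S).extremePoints ℝ).Finite := hS.subset hext
  have hclosed : IsClosed (convexHull ℝ (Set.extremePoints ℝ (convexHull ℝ S))) :=
    (hfin.isCompact_convexHull (𝕜 := ℝ)).isClosed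
  have h2 := closure_convexHull_extremePoints hcomp (convex_convexHull ℝ S)
  rw [hclosed.closure_eq] at h2
  exact h2

/-- Pointwise formula for `vertexGen`. -/
lemma vertexGen_apply (μ : X →₀ ℕ) (x : X) :
    vertexGen μ x =
      if x ∈ Set.extremePoints ℝ (convexHull ℝ (↑μ.support : Set X)) then μ x else 0 := by
  rw [vertexGen, Finsupp.filter_apply]
  by_cases hx : x ∈ (↑μ.support : Set X)
  · exact if_congr (mem_diff_iff_extreme hx) rfl rfl
  · have hμx : μ x = 0 := Finsupp.notMem_support_iff.1 hx
    simp [hμx]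

lemma extreme_subset_support (μ : X →₀ ℕ) :
    Set.extremePoints ℝ (convexHull ℝ (↑μ.support : Set X)) ⊆ ↑μ.support :=
  extremePoints_convexHull_subset

lemma mem_support_vertexGen (μ : X →₀ ℕ) (x : X) :
    x ∈ (vertexGen μ).support ↔
      x ∈ Set.extremePoints ℝ (convexHull ℝ (↑μ.support : Set X)) := by
  rw [Finsupp.mem_support_iff, vertexGen_apply]
  constructor
  · intro h
    by_contra hcon
    rw [if_neg hcon] at h
    exact h rfl
  · intro h
    rw [if_pos h]
    exact Finsupp.mem_support_iff.1 (extreme_subset_support μ h)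

lemma support_add_coe (μ ψ : X →₀ ℕ) :
    (↑(μ + ψ).support : Set X) = ↑μ.support ∪ ↑ψ.support := by
  ext x
  simp only [Finset.coe_union, Set.mem_union, Finset.mem_coe, Finsupp.mem_support_iff,
    Finsupp.add_apply]
  omega

end Main

/-- on `ℝ^d`, restricting a finite counting measure to the extreme points
of the convex hull of its support is a generator: it satisfies (H1) thinning,
(H2) additivity, (H3) idempotency and (H4) consistency. -/
theorem vertexGen_isGenerator (d : ℕ) :
    (∀ μ : EuclideanSpace ℝ (Fin d) →₀ ℕ, vertexGen μ ≤ μ) ∧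
    (∀ (μ : EuclideanSpace ℝ (Fin d) →₀ ℕ) (x), x ∈ (vertexGen μ).support →
      vertexGen (μ + Finsupp.single x 1) = vertexGen μ + Finsupp.single x 1) ∧
    (∀ μ μ' : EuclideanSpace ℝ (Fin d) →₀ ℕ, μ' ≤ μ - vertexGen μ →
      vertexGen (vertexGen μ + μ') = vertexGen μ) ∧
    (∀ μ μ' ψ : EuclideanSpace ℝ (Fin d) →₀ ℕ, μ' ≤ μ → vertexGen μ = vertexGen μ' →
      vertexGen (μ + ψ) = vertexGen (μ' + ψ)) := by
  refine ⟨?_, ?_, ?_, ?_⟩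
  -- (H1)
  · intro μ
    rw [Finsupp.le_def]
    intro x
    rw [vertexGen_apply]
    split_ifs <;> simp
  -- (H2)
  · intro μ x hx
    have hxV := (mem_support_vertexGen μ x).1 hx
    have hxsupp : x ∈ μ.support := extreme_subset_support μ hxV
    have hsupp : (↑(μ + Finsupp.single x 1).support : Set (EuclideanSpace ℝ (Fin d)))
        = ↑μ.support := by
      rw [support_add_coe]
      rw [Finsupp.support_single_ne_zero x one_ne_zero]
      simp only [Finset.coe_singleton]
      rw [Set.union_singleton, Set.insert_eq_self]
      exact hxsupp
    ext y
    rw [Finsupp.add_apply, vertexGen_apply, vertexGen_apply, hsupp, Finsupp.add_apply]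
    by_cases hy : y ∈ Set.extremePoints ℝ
        (convexHull ℝ (↑μ.support : Set (EuclideanSpace ℝ (Fin d))))
    · rw [if_pos hy, if_pos hy]
    · rw [if_neg hy, if_neg hy, zero_add]
      rw [Finsupp.single_apply, if_neg]
      intro h
      exact hy (h ▸ hxV)
  -- (H3)
  · intro μ μ' hle
    set V := Set.extremePoints ℝ
      (convexHull ℝ (↑μ.support : Set (EuclideanSpace ℝ (Fin d)))) with hV
    have hsuppvg : (↑(vertexGen μ).support : Set (EuclideanSpace ℝ (Fin d))) = V := by
      ext y; exact mem_support_vertexGen μ y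
    have hsupp' : (↑μ'.support : Set (EuclideanSpace ℝ (Fin d))) ⊆ ↑μ.support := by
      intro y hy
      rw [Finset.mem_coe, Finsupp.mem_support_iff] at hy ⊢
      intro h0
      apply hy
      have := hle y
      rw [Finsupp.tsub_apply, h0] at this
      omega
    have hνsupp : (↑(vertexGen μ + μ').support : Set (EuclideanSpace ℝ (Fin d)))
        = ↑(vertexGen μ).support ∪ ↑μ'.support := support_add_coe _ _
    have hconv : convexHull ℝ (↑(vertexGen μ + μ').support : Set (EuclideanSpace ℝ (Fin d)))
        = convexHull ℝ (↑μ.support : Set (EuclideanSpace ℝ (Fin d))) := by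
      apply Set.Subset.antisymm
      · apply convexHull_mono
        rw [hνsupp, hsuppvg]
        exact Set.union_subset (extreme_subset_support μ) hsupp'
      · rw [← minkowski_finite _ (μ.support.finite_toSet)]
        apply convexHull_mono
        rw [hνsupp, hsuppvg]
        exact Set.subset_union_left
    ext y
    rw [vertexGen_apply, vertexGen_apply, hconv]
    by_cases hy : y ∈ V
    · rw [if_pos hy, if_pos hy, Finsupp.add_apply]
      have hμ'y : μ' y = 0 := by
        have h1 := hle y
        rw [Finsupp.tsub_apply] at h1
        have h2 : vertexGen μ y = μ y := by rw [vertexGen_apply, if_pos hy]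
        omega
      have h2 : vertexGen μ y = μ y := by rw [vertexGen_apply, if_pos hy]
      rw [hμ'y, add_zero, h2]
    · rw [if_neg hy, if_neg hy]
  -- (H4)
  · intro μ μ' ψ hle hgen
    have hsupp' : (↑μ'.support : Set (EuclideanSpace ℝ (Fin d))) ⊆ ↑μ.support := by
      intro y hy
      rw [Finset.mem_coe, Finsupp.mem_support_iff] at hy ⊢
      intro h0
      exact hy (Nat.le_zero.1 (h0 ▸ hle y))
    set V := Set.extremePoints ℝ
      (convexHull ℝ (↑μ.support : Set (EuclideanSpace ℝ (Fin d)))) with hV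
    set V' := Set.extremePoints ℝ
      (convexHull ℝ (↑μ'.support : Set (EuclideanSpace ℝ (Fin d)))) with hV'
    have hVV' : V = V' := by
      ext y
      rw [← mem_support_vertexGen, ← mem_support_vertexGen, hgen]
    have hconvμ : convexHull ℝ (↑μ.support : Set (EuclideanSpace ℝ (Fin d)))
        = convexHull ℝ (↑μ'.support : Set (EuclideanSpace ℝ (Fin d))) := by
      apply Set.Subset.antisymm
      · rw [← minkowski_finite _ (μ.support.finite_toSet), ← hV, hVV', hV',
          minkowski_finite _ (μ'.support.finite_toSet)]
      · exact convexHull_mono hsupp'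
    have hconv : convexHull ℝ (↑(μ + ψ).support : Set (EuclideanSpace ℝ (Fin d)))
        = convexHull ℝ (↑(μ' + ψ).support : Set (EuclideanSpace ℝ (Fin d))) := by
      rw [support_add_coe, support_add_coe, ← convexHull_convexHull_union_left,
        hconvμ, convexHull_convexHull_union_left]
    ext y
    rw [vertexGen_apply, vertexGen_apply, hconv]
    set W := Set.extremePoints ℝ
      (convexHull ℝ (↑(μ' + ψ).support : Set (EuclideanSpace ℝ (Fin d)))) with hW
    by_cases hy : y ∈ W
    · rw [if_pos hy, if_pos hy, Finsupp.add_apply, Finsupp.add_apply]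
      have hμ : μ y = μ' y := by
        by_cases hyμ : y ∈ (↑μ.support : Set (EuclideanSpace ℝ (Fin d)))
        · -- y is in conv(supp μ) ⊆ conv(supp(μ'+ψ)), so y is extreme there
          have hsub : convexHull ℝ (↑μ.support : Set (EuclideanSpace ℝ (Fin d)))
              ⊆ convexHull ℝ (↑(μ' + ψ).support : Set (EuclideanSpace ℝ (Fin d))) := by
            rw [← hconv, support_add_coe]
            exact convexHull_mono Set.subset_union_left
          have hyV : y ∈ V := by
            rw [hV]
            exact inter_extremePoints_subset_extremePoints_of_subset hsub
              ⟨subset_convexHull ℝ _ hyμ, hy⟩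
          have h1 : vertexGen μ y = μ y := by rw [vertexGen_apply, if_pos hyV]
          have h2 : vertexGen μ' y = μ' y := by
            rw [vertexGen_apply, if_pos (hVV' ▸ hyV : y ∈ V')]
          rw [← h1, ← h2, hgen]
        · have h0 : μ y = 0 := Finsupp.notMem_support_iff.1 hyμ
          have h0' : μ' y = 0 := Nat.le_zero.1 (h0 ▸ hle y)
          rw [h0, h0']
      rw [hμ]
    · rw [if_neg hy, if_neg hy]
end
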